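/- Let H be an infinite-dimensional complex Hilbert space. Then the identity operator on H is the sum of two commutators of bounded operators: there exist continuous linear maps A, B, C, D : H → H such that (A∘B − B∘A) + (C∘D − D∘C) = id_H. -/

import Mathlib

open Function
open scoped ENNReal

noncomputable section

namespace IdSumTwoComm

variable {α β : Type*}

local notation "ℓ²(" α ")" => lp (fun _ : α => ℂ) 2

private lemma htwo : (0:ℝ) < (2:ℝ≥0∞).toReal := by norm_num

/-- Pullback along an injective map, as a continuous linear map on ℓ². -/
def pull (f : α → β) (hf : Injective f) : ℓ²(β) →L[ℂ] ℓ²(α) := by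
  refine LinearMap.mkContinuous
    { toFun := fun x => ⟨fun a => x (f a), ?_⟩
      map_add' := ?_
      map_smul' := ?_ } 1 ?_
  · exact memℓp_gen (((lp.memℓp x).summable htwo).comp_injective hf)
  · intro x y; rfl
  · intro c x; rfl
  · intro x
    rw [one_mul]
    show ‖(⟨fun a => x (f a), memℓp_gen (((lp.memℓp x).summable htwo).comp_injective hf)⟩ :
        ℓ²(α))‖ ≤ ‖x‖
    rw [lp.norm_eq_tsum_rpow htwo, lp.norm_eq_tsum_rpow htwo]
    refine Real.rpow_le_rpow (tsum_nonneg fun a => Real.rpow_nonneg (norm_nonneg _) _) ?_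
      (by positivity)
    exact Summable.tsum_le_tsum_of_inj f hf (fun c _ => Real.rpow_nonneg (norm_nonneg _) _)
      (fun a => le_rfl) (((lp.memℓp x).summable htwo).comp_injective hf)
      ((lp.memℓp x).summable htwo)

@[simp] lemma pull_apply (f : α → β) (hf : Injective f) (x : ℓ²(β)) (a : α) :
    (pull f hf x) a = x (f a) := rfl

private lemma extend_norm_eq (f : α → β) (hf : Injective f) (x : ℓ²(α)) :
    (fun b => ‖extend f (⇑x) 0 b‖ ^ (2:ℝ≥0∞).toReal)
      = extend f (fun a => ‖x a‖ ^ (2:ℝ≥0∞).toReal) 0 := by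
  funext b
  rcases em (b ∈ Set.range f) with ⟨a, rfl⟩ | h
  · rw [hf.extend_apply, hf.extend_apply]
  · rw [extend_apply' _ _ _ h, extend_apply' _ _ _ h]
    simp [Real.zero_rpow (by norm_num : (2:ℝ≥0∞).toReal ≠ 0)]

private lemma extend_hasSum (f : α → β) (hf : Injective f) (x : ℓ²(α)) :
    HasSum (fun b => ‖extend f (⇑x) 0 b‖ ^ (2:ℝ≥0∞).toReal)
      (∑' a, ‖x a‖ ^ (2:ℝ≥0∞).toReal) := by
  rw [extend_norm_eq f hf x]
  exact (hasSum_extend_zero hf).2 ((lp.memℓp x).summable htwo).hasSum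

/-- Extension by zero along an injective map, as a continuous linear map on ℓ². -/
def push (f : α → β) (hf : Injective f) : ℓ²(α) →L[ℂ] ℓ²(β) := by
  refine LinearMap.mkContinuous
    { toFun := fun x => ⟨extend f (⇑x) 0, memℓp_gen (extend_hasSum f hf x).summable⟩
      map_add' := ?_
      map_smul' := ?_ } 1 ?_
  · intro x y; apply Subtype.ext; funext b
    show extend f (⇑(x + y)) 0 b = extend f (⇑x) 0 b + extend f (⇑y) 0 b
    rcases em (b ∈ Set.range f) with ⟨a, rfl⟩ | h
    · rw [hf.extend_apply, hf.extend_apply, hf.extend_apply, lp.coeFn_add, Pi.add_apply]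
    · rw [extend_apply' _ _ _ h, extend_apply' _ _ _ h, extend_apply' _ _ _ h]; simp
  · intro c x; apply Subtype.ext; funext b
    show extend f (⇑(c • x)) 0 b = c • extend f (⇑x) 0 b
    rcases em (b ∈ Set.range f) with ⟨a, rfl⟩ | h
    · rw [hf.extend_apply, hf.extend_apply, lp.coeFn_smul, Pi.smul_apply]
    · rw [extend_apply' _ _ _ h, extend_apply' _ _ _ h]; simp
  · intro x
    rw [one_mul]
    show ‖(⟨extend f (⇑x) 0, memℓp_gen (extend_hasSum f hf x).summable⟩ :
        ℓ²(β))‖ ≤ ‖x‖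
    rw [lp.norm_eq_tsum_rpow htwo, lp.norm_eq_tsum_rpow htwo, (extend_hasSum f hf x).tsum_eq]

@[simp] lemma push_apply (f : α → β) (hf : Injective f) (x : ℓ²(α)) (b : β) :
    (push f hf x) b = extend f (⇑x) 0 b := rfl

lemma pull_push (f : α → β) (hf : Injective f) (x : ℓ²(α)) :
    pull f hf (push f hf x) = x := by
  apply Subtype.ext; funext a
  simp [hf.extend_apply]

end IdSumTwoComm

end

open IdSumTwoComm in
/-- On an infinite-dimensional complex Hilbert space, the identity operator is the
sum of two commutators of bounded operators. -/
theorem identity_sum_two_commutators_boundedOps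
    (H : Type*) [NormedAddCommGroup H] [InnerProductSpace ℂ H] [CompleteSpace H]
    (hinf : ¬ FiniteDimensional ℂ H) :
    ∃ A B C D : H →L[ℂ] H,
      (A ∘L B - B ∘L A) + (C ∘L D - D ∘L C) = ContinuousLinearMap.id ℂ H := by
  classical
  obtain ⟨w, b, hb⟩ := exists_hilbertBasis ℂ H
  -- `w` is infinite
  haveI : Infinite w := by
    rw [Set.infinite_coe_iff]
    intro hw
    apply hinf
    have hspan := b.dense_span
    have hrange : Set.range ⇑b = w := by rw [hb, Subtype.range_coe]
    rw [hrange] at hspan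
    haveI := FiniteDimensional.span_of_finite ℂ hw
    have hclosed : IsClosed ((Submodule.span ℂ w : Submodule ℂ H) : Set H) :=
      Submodule.closed_of_finiteDimensional _
    rw [hclosed.submodule_topologicalClosure_eq] at hspan
    haveI : FiniteDimensional ℂ (⊤ : Submodule ℂ H) := by
      rw [← hspan]; infer_instance
    exact Submodule.topEquiv.finiteDimensional
  -- a bijection `w ⊕ w ≃ w`
  obtain ⟨e⟩ : Nonempty ((w ⊕ w) ≃ w) := by
    rw [← Cardinal.eq]
    simp [Cardinal.mk_sum, Cardinal.add_eq_self (Cardinal.aleph0_le_mk w)]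
  set f1 : w → w := fun i => e (Sum.inl i) with hf1def
  set f2 : w → w := fun i => e (Sum.inr i) with hf2def
  have hf1 : Function.Injective f1 := fun i j h => by
    simpa using e.injective h
  have hf2 : Function.Injective f2 := fun i j h => by
    simpa using e.injective h
  -- the four operators, conjugated back to `H` via the Hilbert basis
  set U := b.repr with hU
  set A : H →L[ℂ] H :=
    (U.symm.toContinuousLinearEquiv : _ →L[ℂ] H) ∘L (pull f1 hf1) ∘L
      (U.toContinuousLinearEquiv : H →L[ℂ] _) with hA
  set B : H →L[ℂ] H :=
    (U.symm.toContinuousLinearEquiv : _ →L[ℂ] H) ∘L (push f1 hf1) ∘L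
      (U.toContinuousLinearEquiv : H →L[ℂ] _) with hB
  set C : H →L[ℂ] H :=
    (U.symm.toContinuousLinearEquiv : _ →L[ℂ] H) ∘L (pull f2 hf2) ∘L
      (U.toContinuousLinearEquiv : H →L[ℂ] _) with hC
  set D : H →L[ℂ] H :=
    (U.symm.toContinuousLinearEquiv : _ →L[ℂ] H) ∘L (push f2 hf2) ∘L
      (U.toContinuousLinearEquiv : H →L[ℂ] _) with hD
  refine ⟨A, B, C, D, ?_⟩
  ext x
  have hUV : ∀ y, U (U.symm y) = y := fun y => U.apply_symm_apply y
  simp only [ContinuousLinearMap.add_apply, ContinuousLinearMap.sub_apply,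
    ContinuousLinearMap.comp_apply, ContinuousLinearMap.coe_id', id_eq, hA, hB, hC, hD,
    LinearIsometryEquiv.coe_toContinuousLinearEquiv,
    ContinuousLinearEquiv.coe_coe, hUV]
  -- reduce to an identity in ℓ²(w)
  set y := U x with hy
  have key : (pull f1 hf1 (push f1 hf1 y) - push f1 hf1 (pull f1 hf1 y))
      + (pull f2 hf2 (push f2 hf2 y) - push f2 hf2 (pull f2 hf2 y)) = y := by
    rw [pull_push, pull_push]
    have hsum : push f1 hf1 (pull f1 hf1 y) + push f2 hf2 (pull f2 hf2 y) = y := by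
      apply Subtype.ext; funext j
      have : ∀ j : w, (j ∈ Set.range f1 ∧ j ∉ Set.range f2)
          ∨ (j ∉ Set.range f1 ∧ j ∈ Set.range f2) := by
        intro j
        rcases hsj : e.symm j with a | a
        · refine Or.inl ⟨⟨a, ?_⟩, ?_⟩
          · rw [hf1def]
            simp only
            rw [← hsj, Equiv.apply_symm_apply]
          · rintro ⟨c, hc⟩
            rw [hf2def] at hc
            apply_fun e.symm at hc
            simp only [Equiv.symm_apply_apply] at hc
            rw [← hc] at hsj
            exact Sum.inr_ne_inl hsj
        · refine Or.inr ⟨?_, ⟨a, ?_⟩⟩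
          · rintro ⟨c, hc⟩
            rw [hf1def] at hc
            apply_fun e.symm at hc
            simp only [Equiv.symm_apply_apply] at hc
            rw [← hc] at hsj
            exact Sum.inl_ne_inr hsj
          · rw [hf2def]
            simp only
            rw [← hsj, Equiv.apply_symm_apply]
      have hcoe : (⇑(push f1 hf1 (pull f1 hf1 y) + push f2 hf2 (pull f2 hf2 y)) : w → ℂ) j
          = push f1 hf1 (pull f1 hf1 y) j + push f2 hf2 (pull f2 hf2 y) j := by
        rw [lp.coeFn_add]; rfl
      rw [hcoe]
      rcases this j with ⟨⟨a, rfl⟩, h2⟩ | ⟨h1, ⟨a, rfl⟩⟩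
      · rw [push_apply, push_apply, hf1.extend_apply, Function.extend_apply' _ _ _ h2]
        simp
      · rw [push_apply, push_apply, hf2.extend_apply, Function.extend_apply' _ _ _ h1]
        simp
    rw [sub_add_sub_comm, hsum, add_sub_cancel_right]
  calc U.symm (pull f1 hf1 (push f1 hf1 y)) - U.symm (push f1 hf1 (pull f1 hf1 y))
      + (U.symm (pull f2 hf2 (push f2 hf2 y)) - U.symm (push f2 hf2 (pull f2 hf2 y)))
      = U.symm ((pull f1 hf1 (push f1 hf1 y) - push f1 hf1 (pull f1 hf1 y))
        + (pull f2 hf2 (push f2 hf2 y) - push f2 hf2 (pull f2 hf2 y))) := by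
        simp [map_add, map_sub]
    _ = U.symm y := by rw [key]
    _ = x := by rw [hy, U.symm_apply_apply]
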